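/- Gaussian mechanism privacy: for a function f: D → ℝ^k with L₂-sensitivity Δ₂f, the mechanism A(D) = f(D) + N(0, σ²I_k) is (ε, δ)-differentially private for ε ∈ (0,1) whenever σ ≥ Δ₂f · √(2 ln(1.25/δ))/ε. -/

import Mathlib

open MeasureTheory ProbabilityTheory

open Real Set Filter
open scoped ENNReal NNReal Topology

namespace GM

/-- Pointwise factorization of product of two centered Gaussian pdfs. -/
lemma pdf_conv_pointwise (a b : ℝ≥0) (ha : a ≠ 0) (hb : b ≠ 0) (z x : ℝ) :
    gaussianPDFReal 0 a x * gaussianPDFReal 0 b (z - x) =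
      gaussianPDFReal 0 (a + b) z * gaussianPDFReal ((a : ℝ) * z / (a + b)) (a * b / (a + b)) x := by
  have ha' : (0:ℝ) < a := lt_of_le_of_ne a.coe_nonneg (by exact_mod_cast (Ne.symm ha))
  have hb' : (0:ℝ) < b := lt_of_le_of_ne b.coe_nonneg (by exact_mod_cast (Ne.symm hb))
  have hab : (0:ℝ) < (a:ℝ) + b := by linarith
  have hpi : (0:ℝ) < π := Real.pi_pos
  simp only [gaussianPDFReal, sub_zero]
  have hcoe : ((a * b / (a + b) : ℝ≥0) : ℝ) = (a:ℝ) * b / ((a:ℝ) + b) := by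
    push_cast; ring
  rw [hcoe]
  push_cast
  -- constants
  have hconst : (√(2 * π * a))⁻¹ * (√(2 * π * b))⁻¹ =
      (√(2 * π * ((a:ℝ) + b)))⁻¹ * (√(2 * π * ((a:ℝ) * b / ((a:ℝ) + b))))⁻¹ := by
    rw [← mul_inv, ← mul_inv, ← Real.sqrt_mul (by positivity), ← Real.sqrt_mul (by positivity)]
    congr 1
    congr 1
    field_simp
  -- exponents
  have hexp : (-x ^ 2 / (2 * a)) + (-(z - x) ^ 2 / (2 * b)) =
      (-z ^ 2 / (2 * ((a:ℝ) + b))) +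
        (-(x - (a:ℝ) * z / ((a:ℝ) + b)) ^ 2 / (2 * ((a:ℝ) * b / ((a:ℝ) + b)))) := by
    field_simp
    ring
  calc (√(2 * π * a))⁻¹ * rexp (-x ^ 2 / (2 * a)) *
        ((√(2 * π * b))⁻¹ * rexp (-(z - x) ^ 2 / (2 * b)))
      = ((√(2 * π * a))⁻¹ * (√(2 * π * b))⁻¹) *
          rexp ((-x ^ 2 / (2 * a)) + (-(z - x) ^ 2 / (2 * b))) := by
        rw [Real.exp_add]; ring
    _ = ((√(2 * π * ((a:ℝ) + b)))⁻¹ * (√(2 * π * ((a:ℝ) * b / ((a:ℝ) + b))))⁻¹) *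
          rexp ((-z ^ 2 / (2 * ((a:ℝ) + b))) +
            (-(x - (a:ℝ) * z / ((a:ℝ) + b)) ^ 2 / (2 * ((a:ℝ) * b / ((a:ℝ) + b))))) := by
        rw [hconst, hexp]
    _ = _ := by rw [Real.exp_add]; ring

lemma pdf_conv_integral (a b : ℝ≥0) (ha : a ≠ 0) (hb : b ≠ 0) (z : ℝ) :
    ∫ x, gaussianPDFReal 0 a x * gaussianPDFReal 0 b (z - x) =
      gaussianPDFReal 0 (a + b) z := by
  have hs : (a * b / (a + b) : ℝ≥0) ≠ 0 := by
    have : a + b ≠ 0 := by simp [ha, hb]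
    simp [div_eq_zero_iff, ha, hb, this]
  simp_rw [pdf_conv_pointwise a b ha hb z]
  rw [integral_const_mul, integral_gaussianPDFReal_eq_one _ hs, mul_one]

lemma gaussianPDF_shift (x b z : ℝ≥0 → Prop) : True := trivial

lemma gauss_conv (a b : ℝ≥0) :
    Measure.map (fun p : ℝ × ℝ => p.1 + p.2)
        ((gaussianReal 0 a).prod (gaussianReal 0 b)) = gaussianReal 0 (a + b) := by
  by_cases ha : a = 0
  · subst ha
    rw [gaussianReal_zero_var, Measure.dirac_prod, Measure.map_map (by fun_prop) (by fun_prop)]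
    simp only [Function.comp_def, zero_add]
    simp [Measure.map_id]
  by_cases hb : b = 0
  · subst hb
    rw [gaussianReal_zero_var, Measure.prod_dirac, Measure.map_map (by fun_prop) (by fun_prop)]
    simp only [Function.comp_def, add_zero]
    simp [Measure.map_id]
  have hab : a + b ≠ 0 := by simp [ha, hb]
  have hshift : ∀ x z : ℝ, gaussianPDF x b z = gaussianPDF 0 b (z - x) := by
    intro x z
    simp [gaussianPDF, gaussianPDFReal]
  have hmeas2 : Measurable (Function.uncurry fun x z : ℝ => gaussianPDF 0 b (z - x)) :=
    (measurable_gaussianPDF 0 b).comp (measurable_snd.sub measurable_fst)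
  ext s hs
  rw [Measure.map_apply (by fun_prop) hs]
  rw [Measure.prod_apply (measurable_add hs)]
  have h1 : ∀ x : ℝ, (gaussianReal 0 b) (Prod.mk x ⁻¹' ((fun p : ℝ × ℝ => p.1 + p.2) ⁻¹' s))
      = ∫⁻ z in s, gaussianPDF 0 b (z - x) := by
    intro x
    have h2 : Prod.mk x ⁻¹' ((fun p : ℝ × ℝ => p.1 + p.2) ⁻¹' s) = (fun y => x + y) ⁻¹' s := rfl
    rw [h2, ← Measure.map_apply (by fun_prop) hs, gaussianReal_map_const_add,
      zero_add, gaussianReal_apply _ hb]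
    exact setLIntegral_congr_fun hs (fun z _ => hshift x z)
  simp_rw [h1]
  rw [gaussianReal_of_var_ne_zero _ ha,
    lintegral_withDensity_eq_lintegral_mul _ (measurable_gaussianPDF _ _)
      (Measurable.lintegral_prod_right hmeas2)]
  have h3 : ∀ x : ℝ, (gaussianPDF 0 a * fun x => ∫⁻ z in s, gaussianPDF 0 b (z - x)) x
      = ∫⁻ z in s, gaussianPDF 0 a x * gaussianPDF 0 b (z - x) := by
    intro x
    simp only [Pi.mul_apply]
    rw [lintegral_const_mul _ (show Measurable fun z : ℝ => gaussianPDF 0 b (z - x) from (measurable_gaussianPDF 0 b).comp (measurable_id.sub_const x))]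
  simp_rw [h3]
  rw [lintegral_lintegral_swap (((measurable_gaussianPDF 0 a).comp measurable_fst).mul hmeas2).aemeasurable]
  rw [gaussianReal_apply _ hab]
  refine setLIntegral_congr_fun hs (fun z _ => ?_)
  have h4 : ∀ x : ℝ, gaussianPDF 0 a x * gaussianPDF 0 b (z - x)
      = ENNReal.ofReal (gaussianPDFReal 0 a x * gaussianPDFReal 0 b (z - x)) := by
    intro x
    rw [gaussianPDF, gaussianPDF, ← ENNReal.ofReal_mul (gaussianPDFReal_nonneg _ _ _)]
  simp_rw [h4]
  have hint : Integrable (fun x => gaussianPDFReal 0 a x * gaussianPDFReal 0 b (z - x)) := by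
    have := (integrable_gaussianPDFReal ((a : ℝ) * z / (a + b))
      (a * b / (a + b))).const_mul (gaussianPDFReal 0 (a + b) z)
    refine this.congr ?_
    exact ae_of_all _ fun x => (pdf_conv_pointwise a b ha hb z x).symm
  rw [← ofReal_integral_eq_lintegral_ofReal hint
    (ae_of_all _ fun x => mul_nonneg (gaussianPDFReal_nonneg _ _ _) (gaussianPDFReal_nonneg _ _ _)),
    pdf_conv_integral a b ha hb z, gaussianPDF]

lemma map_sum (t : ℝ≥0) : ∀ (n : ℕ) (v : Fin n → ℝ),
    Measure.map (fun y : Fin n → ℝ => ∑ i, v i * y i)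
        (Measure.pi fun _ => gaussianReal 0 t)
      = gaussianReal 0 ((∑ i, (v i) ^ 2).toNNReal * t) := by
  intro n
  induction n with
  | zero =>
      intro v
      simp only [Finset.univ_eq_empty, Finset.sum_empty]
      rw [Measure.map_const]
      simp [Real.toNNReal_zero]
  | succ n ih =>
      intro v
      have mp := measurePreserving_piFinSuccAbove (fun _ : Fin (n + 1) => gaussianReal 0 t) 0
      set e := MeasurableEquiv.piFinSuccAbove (fun _ : Fin (n + 1) => ℝ) 0 with he
      set F : ℝ × ℝ → ℝ := fun p => p.1 + p.2 with hF
      set G : (Fin (n + 1) → ℝ) → ℝ × (Fin n → ℝ) := ⇑e with hG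
      set H : ℝ × (Fin n → ℝ) → ℝ × ℝ :=
        Prod.map (fun x : ℝ => v 0 * x) (fun y : Fin n → ℝ => ∑ j, v j.succ * y j) with hH
      have hcomp : (fun y : Fin (n + 1) → ℝ => ∑ i, v i * y i) = (F ∘ H) ∘ G := by
        funext y
        simp [F, H, G, e, MeasurableEquiv.piFinSuccAbove, Fin.sum_univ_succ, Fin.removeNth,
          Fin.tail, Fin.succAbove_zero, Function.comp]
      have hFm : Measurable F := by fun_prop
      have hHm : Measurable H := by
        apply Measurable.prodMap (by fun_prop)
        exact Finset.measurable_sum _ fun j _ => (measurable_pi_apply j).const_mul _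
      rw [hcomp, ← Measure.map_map (hFm.comp hHm) (MeasurableEquiv.measurable e), mp.map_eq,
        ← Measure.map_map hFm hHm]
      rw [hH, ← Measure.map_prod_map _ _ (by fun_prop)
        (Finset.measurable_sum _ fun j _ => (measurable_pi_apply j).const_mul _)]
      rw [gaussianReal_map_const_mul, ih (fun j => v j.succ), mul_zero, hF, gauss_conv]
      congr 1
      ext
      push_cast [Real.coe_toNNReal _ (Finset.sum_nonneg fun i _ => sq_nonneg (v i)),
        Real.coe_toNNReal _ (Finset.sum_nonneg fun (i : Fin n) _ => sq_nonneg (v i.succ))]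
      rw [Fin.sum_univ_succ]
      ring

lemma lintegral_pi_prod : ∀ (n : ℕ) (μ : Fin n → Measure ℝ), (∀ i, SigmaFinite (μ i)) →
    ∀ (g : Fin n → ℝ → ℝ≥0∞), (∀ i, Measurable (g i)) →
    ∫⁻ y, ∏ i, g i (y i) ∂Measure.pi μ = ∏ i, ∫⁻ x, g i x ∂μ i := by
  intro n
  induction n with
  | zero =>
      intro μ _ g _
      simp only [Finset.univ_eq_empty, Finset.prod_empty]
      rw [lintegral_one]
      simp [Measure.pi_of_empty]
  | succ n ih =>
      intro μ hsf g hg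
      have : ∀ i, SigmaFinite (μ i) := hsf
      have mp := measurePreserving_piFinSuccAbove μ 0
      set e := MeasurableEquiv.piFinSuccAbove (fun _ : Fin (n + 1) => ℝ) 0 with he
      have h1 : ∫⁻ y, ∏ i, g i (y i) ∂Measure.pi μ
          = ∫⁻ p, ∏ i, g i (e.symm p i) ∂((μ 0).prod (Measure.pi fun j => μ (Fin.succAbove 0 j))) := by
        rw [← mp.map_eq, lintegral_map_equiv]
        congr 1
        funext y
        simp
      rw [h1]
      have h2 : ∀ p : ℝ × (Fin n → ℝ), ∏ i, g i (e.symm p i)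
          = g 0 p.1 * ∏ j, g j.succ (p.2 j) := by
        intro p
        have hcons : ∀ i, e.symm p i = (Fin.cons p.1 p.2 : ∀ _ : Fin (n + 1), ℝ) i := by
          intro i
          simp [e, MeasurableEquiv.piFinSuccAbove, Fin.insertNthEquiv, Fin.insertNth_zero]
        simp_rw [hcons]
        rw [Fin.prod_univ_succ]
        simp
      simp_rw [h2]
      rw [lintegral_prod _ (by
        exact ((hg 0).comp measurable_fst |>.mul
          ((Finset.measurable_prod _ fun (j : Fin n) _ => (hg j.succ).comp (measurable_pi_apply j)).comp
            measurable_snd)).aemeasurable)]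
      have h3 : ∀ x : ℝ, ∫⁻ w, g 0 x * ∏ j, g j.succ (w j) ∂(Measure.pi fun j : Fin n => μ (Fin.succAbove 0 j))
          = g 0 x * ∏ j, ∫⁻ u, g j.succ u ∂μ (Fin.succAbove 0 j) := by
        intro x
        rw [lintegral_const_mul _ (Finset.measurable_prod _ fun j _ => (hg j.succ).comp (measurable_pi_apply j))]
        rw [ih _ (fun j => hsf _) (fun j => g j.succ) (fun j => hg j.succ)]
      simp_rw [h3]
      rw [lintegral_mul_const _ (hg 0), Fin.prod_univ_succ]
      simp [Fin.succAbove_zero]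

lemma pi_density {k : ℕ} (m : Fin k → ℝ) (t : ℝ≥0) (ht : t ≠ 0) :
    Measure.pi (fun i => gaussianReal (m i) t)
      = (Measure.pi fun _ : Fin k => (volume : Measure ℝ)).withDensity
          (fun y => ∏ i, gaussianPDF (m i) t (y i)) := by
  apply Measure.pi_eq
  intro s hs
  rw [withDensity_apply _ (MeasurableSet.univ_pi hs)]
  have h1 : ∀ y : Fin k → ℝ, (univ.pi s).indicator (fun y => ∏ i, gaussianPDF (m i) t (y i)) y
      = ∏ i, (s i).indicator (gaussianPDF (m i) t) (y i) := by
    intro y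
    by_cases hy : y ∈ univ.pi s
    · rw [indicator_of_mem hy]
      exact Finset.prod_congr rfl fun i _ => (indicator_of_mem (hy i (Set.mem_univ i)) _).symm
    · rw [indicator_of_notMem hy]
      simp only [Set.mem_pi, Set.mem_univ, forall_true_left, not_forall] at hy
      obtain ⟨i, hi⟩ := hy
      exact (Finset.prod_eq_zero (Finset.mem_univ i) (indicator_of_notMem hi _)).symm
  rw [← lintegral_indicator (MeasurableSet.univ_pi hs)
    (fun y => ∏ i, gaussianPDF (m i) t (y i))]
  simp_rw [h1]
  rw [lintegral_pi_prod k _ (fun _ => by infer_instance) _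
    (fun i => (measurable_gaussianPDF _ _).indicator (hs i))]
  refine Finset.prod_congr rfl fun i _ => ?_
  rw [lintegral_indicator (hs i), ← gaussianReal_apply _ ht]

lemma mech_eq {k : ℕ} (m : Fin k → ℝ) (t : ℝ≥0) :
    Measure.map (fun ν : Fin k → ℝ => fun i => m i + ν i)
        (Measure.pi fun _ : Fin k => gaussianReal 0 t)
      = Measure.pi (fun i => gaussianReal (m i) t) := by
  symm
  apply Measure.pi_eq
  intro s hs
  rw [Measure.map_apply (measurable_pi_lambda _ fun i => (measurable_pi_apply i).const_add (m i))
    (MeasurableSet.univ_pi hs)]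
  have h1 : (fun ν : Fin k → ℝ => fun i => m i + ν i) ⁻¹' univ.pi s
      = univ.pi fun i => (fun x => m i + x) ⁻¹' s i := by
    ext y; simp [Set.mem_pi]
  rw [h1, Measure.pi_pi]
  refine Finset.prod_congr rfl fun i _ => ?_
  rw [← Measure.map_apply (measurable_const_add _) (hs i), gaussianReal_map_const_add, zero_add]

lemma pdf1 (x : ℝ) : gaussianPDFReal 0 1 x = (√(2 * π))⁻¹ * rexp (-x ^ 2 / 2) := by
  simp [gaussianPDFReal]

lemma gauss_symm_half : gaussianReal 0 1 (Ioi (0 : ℝ)) = 1 / 2 := by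
  have hmap : Measure.map (fun x : ℝ => -x) (gaussianReal 0 1) = gaussianReal 0 1 := by
    have h := gaussianReal_map_const_mul (μ := 0) (v := 1) (-1)
    have h2 : (⟨(-1 : ℝ) ^ 2, sq_nonneg _⟩ : ℝ≥0) * 1 = 1 := by
      ext; norm_num
    simp only [neg_one_mul, mul_zero, h2] at h
    rw [h]; congr 1
  have hIio : gaussianReal 0 1 (Iio (0 : ℝ)) = gaussianReal 0 1 (Ioi (0 : ℝ)) := by
    conv_lhs => rw [← hmap]
    rw [Measure.map_apply (measurable_neg) measurableSet_Iio]
    congr 1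
    ext x; simp
  have h0 : gaussianReal 0 1 ({(0 : ℝ)} : Set ℝ) = 0 :=
    gaussianReal_absolutelyContinuous 0 one_ne_zero (volume_singleton)
  have hu : gaussianReal 0 1 (Iio (0:ℝ) ∪ Ioi (0:ℝ)) = 1 := by
    have : Iio (0:ℝ) ∪ Ioi 0 = ({(0:ℝ)} : Set ℝ)ᶜ := by
      ext x; simp [lt_or_lt_iff_ne]
    rw [this, measure_compl (measurableSet_singleton 0) (measure_ne_top _ _), h0,
      measure_univ, tsub_zero]
  have hd : Disjoint (Iio (0:ℝ)) (Ioi 0) := by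
    rw [Set.disjoint_left]
    intro x h1 h2
    simp only [mem_Iio, mem_Ioi] at h1 h2
    linarith
  rw [measure_union hd measurableSet_Ioi, hIio] at hu
  have h2 : 2 * gaussianReal 0 1 (Ioi (0:ℝ)) = 1 := by rw [two_mul]; exact hu
  rw [ENNReal.eq_div_iff (by norm_num) (by norm_num)]
  exact h2

lemma tail_le_exp_half {t : ℝ} (ht : 0 ≤ t) :
    gaussianReal 0 1 (Ioi t) ≤ ENNReal.ofReal (rexp (-t ^ 2 / 2) * (1 / 2)) := by
  rw [gaussianReal_apply _ one_ne_zero]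
  have hpt : ∀ x ∈ Ioi t, gaussianPDF 0 1 x
      ≤ ENNReal.ofReal (rexp (-t ^ 2 / 2)) * gaussianPDF 0 1 (x - t) := by
    intro x hx
    rw [gaussianPDF, gaussianPDF, ← ENNReal.ofReal_mul (exp_nonneg _)]
    apply ENNReal.ofReal_le_ofReal
    rw [pdf1, pdf1, ← mul_assoc, mul_comm (rexp _) (√(2 * π))⁻¹, mul_assoc, ← Real.exp_add]
    have hxt : t ≤ x := le_of_lt hx
    apply mul_le_mul_of_nonneg_left _ (inv_nonneg.2 (Real.sqrt_nonneg _))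
    apply Real.exp_le_exp.2
    nlinarith
  calc ∫⁻ x in Ioi t, gaussianPDF 0 1 x
      ≤ ∫⁻ x in Ioi t, ENNReal.ofReal (rexp (-t ^ 2 / 2)) * gaussianPDF 0 1 (x - t) :=
        setLIntegral_mono ((ENNReal.continuous_ofReal.measurable.comp
          (measurable_gaussianPDFReal 0 1)).comp (measurable_id.sub_const t) |>.const_mul _) hpt
    _ = ENNReal.ofReal (rexp (-t ^ 2 / 2)) * ∫⁻ x in Ioi t, gaussianPDF 0 1 (x - t) := by
        rw [lintegral_const_mul _ (show Measurable fun x : ℝ => gaussianPDF 0 1 (x - t) from (measurable_gaussianPDF 0 1).comp (measurable_id.sub_const t))]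
    _ = ENNReal.ofReal (rexp (-t ^ 2 / 2)) * gaussianReal 0 1 (Ioi 0) := by
        congr 1
        have hvol : Measure.map (fun x : ℝ => x + t) volume = volume := map_add_right_eq_self volume t
        conv_lhs => rw [← hvol]
        rw [setLIntegral_map measurableSet_Ioi (show Measurable fun x : ℝ => gaussianPDF 0 1 (x - t) from
          (measurable_gaussianPDF 0 1).comp (measurable_id.sub_const t)) (measurable_add_const t)]
        have hpre : (fun x : ℝ => x + t) ⁻¹' Ioi t = Ioi 0 := by
          ext x; simp
        rw [hpre, gaussianReal_apply _ one_ne_zero]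
        congr 1
        funext x
        simp
    _ = ENNReal.ofReal (rexp (-t ^ 2 / 2) * (1 / 2)) := by
        rw [gauss_symm_half, ENNReal.ofReal_mul (exp_nonneg _)]
        congr 1
        rw [show (1 : ℝ) / 2 = (2 : ℝ)⁻¹ by norm_num,
          ENNReal.ofReal_inv_of_pos (by norm_num)]
        norm_num

lemma hasDerivAt_neg_exp (x : ℝ) :
    HasDerivAt (fun y : ℝ => -(√(2 * π))⁻¹ * rexp (-y ^ 2 / 2))
      ((√(2 * π))⁻¹ * (x * rexp (-x ^ 2 / 2))) x := by
  have h1 : HasDerivAt (fun y : ℝ => -y ^ 2 / 2) (-x) x := by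
    have := ((hasDerivAt_pow 2 x).neg).div_const 2
    exact this.congr_deriv (by rw [show (2:ℕ) - 1 = 1 from rfl]; push_cast; ring)
  have h2 := (h1.exp).const_mul (-(√(2 * π))⁻¹)
  exact h2.congr_deriv (by ring)

lemma gtend : Tendsto (fun y : ℝ => -(√(2 * π))⁻¹ * rexp (-y ^ 2 / 2)) atTop (𝓝 0) := by
  rw [show (0 : ℝ) = -(√(2 * π))⁻¹ * 0 by ring]
  apply Tendsto.const_mul
  apply (Real.tendsto_exp_atBot).comp
  apply Filter.Tendsto.atBot_div_const (by norm_num)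
  exact tendsto_neg_atBot_iff.mpr (tendsto_pow_atTop (by norm_num))

lemma integrable_xexp_tail {t : ℝ} (ht : 0 < t) :
    IntegrableOn (fun x : ℝ => (√(2 * π))⁻¹ * (x * rexp (-x ^ 2 / 2))) (Ioi t) := by
  apply integrableOn_Ioi_deriv_of_nonneg' (g' := fun x => (√(2 * π))⁻¹ * (x * rexp (-x ^ 2 / 2)))
    (fun x _ => hasDerivAt_neg_exp x) ?_ gtend
  intro x hx
  have hx0 : 0 < x := lt_trans ht hx
  positivity

lemma integral_xexp_tail {t : ℝ} (ht : 0 < t) :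
    ∫ x in Ioi t, (√(2 * π))⁻¹ * (x * rexp (-x ^ 2 / 2)) = (√(2 * π))⁻¹ * rexp (-t ^ 2 / 2) := by
  rw [integral_Ioi_of_hasDerivAt_of_tendsto' (fun x _ => hasDerivAt_neg_exp x)
    (integrable_xexp_tail ht) gtend]
  ring

lemma tail_le_inv {t : ℝ} (ht : 0 < t) :
    gaussianReal 0 1 (Ioi t) ≤ ENNReal.ofReal (rexp (-t ^ 2 / 2) * (√(2 * π) * t)⁻¹) := by
  rw [gaussianReal_apply_eq_integral _ one_ne_zero]
  apply ENNReal.ofReal_le_ofReal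
  have hle : ∫ x in Ioi t, gaussianPDFReal 0 1 x
      ≤ ∫ x in Ioi t, t⁻¹ * ((√(2 * π))⁻¹ * (x * rexp (-x ^ 2 / 2))) := by
    apply setIntegral_mono_on ((integrable_gaussianPDFReal 0 1).restrict)
      ((integrable_xexp_tail ht).const_mul _) measurableSet_Ioi
    intro x hx
    rw [pdf1]
    have hx0 : 0 < x := lt_trans ht hx
    have h1 : 1 ≤ x / t := (one_le_div ht).2 (le_of_lt hx)
    have h2 : (√(2 * π))⁻¹ * rexp (-x ^ 2 / 2)
        ≤ (x / t) * ((√(2 * π))⁻¹ * rexp (-x ^ 2 / 2)) := by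
      nth_rewrite 1 [← one_mul ((√(2 * π))⁻¹ * rexp (-x ^ 2 / 2))]
      apply mul_le_mul_of_nonneg_right h1 (by positivity)
    calc (√(2 * π))⁻¹ * rexp (-x ^ 2 / 2) ≤ (x / t) * ((√(2 * π))⁻¹ * rexp (-x ^ 2 / 2)) := h2
      _ = t⁻¹ * ((√(2 * π))⁻¹ * (x * rexp (-x ^ 2 / 2))) := by ring
  rw [integral_const_mul, integral_xexp_tail ht] at hle
  calc ∫ x in Ioi t, gaussianPDFReal 0 1 x ≤ t⁻¹ * ((√(2 * π))⁻¹ * rexp (-t ^ 2 / 2)) := hle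
    _ = rexp (-t ^ 2 / 2) * (√(2 * π) * t)⁻¹ := by
        rw [mul_inv]
        ring

lemma tail_neg {t : ℝ} (ht : t < 0) :
    gaussianReal 0 1 (Ioi t) ≤ ENNReal.ofReal (1 / 2 + (-t) * (√(2 * π))⁻¹) := by
  have hsplit : Ioi t = Ioc t 0 ∪ Ioi (0 : ℝ) := (Set.Ioc_union_Ioi_eq_Ioi (le_of_lt ht)).symm
  rw [hsplit]
  calc gaussianReal 0 1 (Ioc t 0 ∪ Ioi (0:ℝ))
      ≤ gaussianReal 0 1 (Ioc t 0) + gaussianReal 0 1 (Ioi (0:ℝ)) := measure_union_le _ _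
    _ ≤ ENNReal.ofReal ((-t) * (√(2 * π))⁻¹) + ENNReal.ofReal (1 / 2) := by
        gcongr
        · rw [gaussianReal_apply _ one_ne_zero]
          have hb : ∀ x ∈ Ioc t (0:ℝ), gaussianPDF 0 1 x ≤ ENNReal.ofReal ((√(2 * π))⁻¹) := by
            intro x _
            rw [gaussianPDF]
            apply ENNReal.ofReal_le_ofReal
            rw [pdf1]
            nth_rewrite 2 [← mul_one ((√(2 * π))⁻¹)]
            apply mul_le_mul_of_nonneg_left _ (inv_nonneg.2 (Real.sqrt_nonneg _))
            apply Real.exp_le_one_iff.2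
            nlinarith [sq_nonneg x]
          calc ∫⁻ x in Ioc t 0, gaussianPDF 0 1 x
              ≤ ∫⁻ _ in Ioc t 0, ENNReal.ofReal ((√(2 * π))⁻¹) := setLIntegral_mono measurable_const hb
            _ = ENNReal.ofReal ((√(2 * π))⁻¹) * volume (Ioc t 0) := by
                rw [setLIntegral_const]
            _ = ENNReal.ofReal ((-t) * (√(2 * π))⁻¹) := by
                rw [Real.volume_Ioc, ← ENNReal.ofReal_mul (by positivity)]
                rw [mul_comm]
                congr 1
                ring
        · rw [gauss_symm_half]
          rw [show (1 : ℝ) / 2 = (2 : ℝ)⁻¹ by norm_num,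
            ENNReal.ofReal_inv_of_pos (by norm_num)]
          norm_num
    _ = ENNReal.ofReal (1 / 2 + (-t) * (√(2 * π))⁻¹) := by
        rw [← ENNReal.ofReal_add (mul_nonneg (by linarith) (inv_nonneg.2 (Real.sqrt_nonneg _))) (by norm_num)]
        rw [add_comm]

lemma gauss_scale (w : ℝ≥0) (hw : w ≠ 0) (T : ℝ) :
    gaussianReal 0 w (Ioi T) = gaussianReal 0 1 (Ioi (T / √(w : ℝ))) := by
  have hw' : (0 : ℝ) < w := lt_of_le_of_ne w.coe_nonneg (by exact_mod_cast (Ne.symm hw))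
  have hs : (0 : ℝ) < √(w : ℝ) := Real.sqrt_pos.2 hw'
  have hmap : Measure.map (fun x : ℝ => √(w : ℝ) * x) (gaussianReal 0 1) = gaussianReal 0 w := by
    rw [gaussianReal_map_const_mul]
    congr 1
    · ring
    · ext
      push_cast
      rw [mul_one]
      exact Real.sq_sqrt (le_of_lt hw')
  rw [← hmap, Measure.map_apply (measurable_const_mul _) measurableSet_Ioi]
  congr 1
  ext x
  simp only [mem_preimage, mem_Ioi]
  rw [mul_comm]
  exact (div_lt_iff₀ hs).symm

lemma exp_le_inv_one_sub {x : ℝ} (hx0 : 0 ≤ x) (hx : x < 1) : rexp x ≤ (1 - x)⁻¹ := by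
  have h1 : 1 - x ≤ rexp (-x) := by
    have := Real.add_one_le_exp (-x)
    linarith
  have h2 : 0 < 1 - x := by linarith
  rw [Real.exp_neg] at h1
  rw [← inv_inv (rexp x)]
  exact inv_anti₀ (by positivity) h1

lemma sqrt_two_pi_ge : (2.5 : ℝ) ≤ √(2 * π) := by
  rw [show (2.5 : ℝ) = √(2.5 ^ 2) by rw [Real.sqrt_sq (by norm_num)]]
  apply Real.sqrt_le_sqrt
  nlinarith [Real.pi_gt_d6]

lemma log_oneQuarter : (0.22 : ℝ) < Real.log 1.25 := by
  rw [Real.lt_log_iff_exp_lt (by norm_num)]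
  have h1 : rexp 0.0275 ≤ (1 - 0.0275 : ℝ)⁻¹ := exp_le_inv_one_sub (by norm_num) (by norm_num)
  have h2 : rexp (0.22 : ℝ) = rexp 0.0275 ^ (8 : ℕ) := by
    rw [← Real.exp_nat_mul]; norm_num
  have h3 : rexp 0.0275 ^ (8:ℕ) ≤ ((1 - 0.0275 : ℝ)⁻¹) ^ (8:ℕ) :=
    pow_le_pow_left₀ (le_of_lt (Real.exp_pos _)) h1 8
  have h4 : ((1 - 0.0275 : ℝ)⁻¹) ^ (8:ℕ) < 1.25 := by
    rw [inv_pow]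
    have h5 : (0.8 : ℝ) < (1 - 0.0275 : ℝ) ^ (8:ℕ) := by norm_num
    have h6 : ((1 - 0.0275 : ℝ) ^ (8:ℕ))⁻¹ < (0.8 : ℝ)⁻¹ := by
      apply inv_strictAnti₀ (by norm_num) h5
    calc ((1 - 0.0275 : ℝ) ^ (8:ℕ))⁻¹ < (0.8 : ℝ)⁻¹ := h6
      _ = 1.25 := by norm_num
  calc rexp (0.22:ℝ) = rexp 0.0275 ^ (8:ℕ) := h2
    _ ≤ _ := h3
    _ < 1.25 := h4

set_option maxHeartbeats 2000000 in
lemma numeric {ε δ r Δ σ : ℝ} (hε0 : 0 < ε) (hε1 : ε < 1) (hδ0 : 0 < δ) (hδ1 : δ < 1)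
    (hr : 0 < r) (hrΔ : r ≤ Δ) (hσ : Δ * √(2 * Real.log (1.25 / δ)) / ε ≤ σ) :
    gaussianReal 0 1 (Ioi (σ * ε / r - r / (2 * σ))) ≤ ENNReal.ofReal δ := by
  set L := Real.log (1.25 / δ) with hLdef
  have hlog : Real.log (1.25 / δ) = Real.log 1.25 - Real.log δ := Real.log_div (by norm_num) (ne_of_gt hδ0)
  have hlogδ : Real.log δ < 0 := Real.log_neg hδ0 hδ1
  have hL : 0.22 < L := by
    rw [hLdef, hlog]
    have := log_oneQuarter
    linarith
  set c := √(2 * L) with hcdef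
  have hc2 : c ^ 2 = 2 * L := Real.sq_sqrt (by linarith)
  have hc0 : 0 ≤ c := Real.sqrt_nonneg _
  have hc : 0.66 < c := by nlinarith
  have hΔ : 0 < Δ := lt_of_lt_of_le hr hrΔ
  have hσ0 : 0 < σ := lt_of_lt_of_le (by positivity) hσ
  have hδeq : δ = 1.25 * rexp (-(c ^ 2) / 2) := by
    rw [hc2, hLdef]
    rw [show -(2 * Real.log (1.25 / δ)) / 2 = -Real.log (1.25 / δ) by ring]
    rw [Real.exp_neg, Real.exp_log (by positivity)]
    field_simp
  set t₀ := σ * ε / r - r / (2 * σ) with ht₀def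
  have hA1 : c ≤ σ * ε / r := by
    rw [le_div_iff₀ hr]
    have h := (div_le_iff₀ hε0).mp hσ
    nlinarith
  have hA2 : r / (2 * σ) ≤ ε / (2 * c) := by
    have hc0' : 0 < c := by linarith
    have hΔc : Δ * c ≤ σ * ε := by
      have h := (div_le_iff₀ hε0).mp hσ
      linarith
    rw [div_le_div_iff₀ (by positivity) (by positivity)]
    nlinarith
  have ht₀ : c - ε / (2 * c) ≤ t₀ := by
    rw [ht₀def]
    linarith
  have hc0' : 0 < c := by linarith
  clear_value L
  clear_value c
  clear_value t₀
  have hε2c : ε / (2 * c) ≤ 1 / (2 * c) := by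
    exact div_le_div_of_nonneg_right (le_of_lt hε1) (by positivity)
  by_cases hcase : (1.1 : ℝ) ≤ c
  · -- large c : use sharp tail bound
    have ht1 : (0.645 : ℝ) ≤ t₀ := by
      have h1 : 1 / (2 * c) ≤ 1 / 2.2 := by
        apply div_le_div_of_nonneg_left (by norm_num) (by norm_num) (by linarith)
      have h2 : ε / (2 * c) ≤ 1 / 2.2 := le_trans hε2c h1
      have := ht₀
      linarith
    have ht0pos : (0 : ℝ) < t₀ := by linarith
    refine le_trans (tail_le_inv ht0pos) (ENNReal.ofReal_le_ofReal ?_)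
    -- need: exp(-t₀²/2) * (√(2π) t₀)⁻¹ ≤ δ
    have hsq : c ^ 2 - t₀ ^ 2 ≤ ε := by
      have h1 : 0 ≤ c - ε / (2 * c) := by
        have : ε / (2 * c) ≤ 1 / 2.2 := le_trans hε2c (by
          apply div_le_div_of_nonneg_left (by norm_num) (by norm_num) (by linarith))
        linarith
      have h2 : (c - ε / (2 * c)) ^ 2 ≤ t₀ ^ 2 := by nlinarith
      have h3 : (c - ε / (2 * c)) ^ 2 = c ^ 2 - ε + (ε / (2 * c)) ^ 2 := by
        field_simp
        ring
      nlinarith [sq_nonneg (ε / (2 * c))]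
    have hexp1 : rexp (-t₀ ^ 2 / 2) ≤ rexp (1 / 2) * rexp (-(c ^ 2) / 2) := by
      rw [← Real.exp_add]
      apply Real.exp_le_exp.2
      linarith
    have hexp2 : rexp (1 / 2 : ℝ) ≤ 16 / 9 := by
      have h1 : rexp (1 / 4 : ℝ) ≤ (1 - 1 / 4 : ℝ)⁻¹ := exp_le_inv_one_sub (by norm_num) (by norm_num)
      have h2 : rexp (1 / 2 : ℝ) = rexp (1 / 4) * rexp (1 / 4) := by
        rw [← Real.exp_add]; norm_num
      rw [h2]
      have h3 : ((1 : ℝ) - 1 / 4)⁻¹ = 4 / 3 := by norm_num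
      rw [h3] at h1
      nlinarith [Real.exp_pos (1/4 : ℝ)]
    have hE : 0 < rexp (-(c ^ 2) / 2) := Real.exp_pos _
    have hs : (2.5 : ℝ) ≤ √(2 * π) := sqrt_two_pi_ge
    rw [mul_inv_le_iff₀ (by positivity)]
    calc rexp (-t₀ ^ 2 / 2) ≤ (16 / 9) * rexp (-(c ^ 2) / 2) := by nlinarith
      _ ≤ δ * (√(2 * π) * t₀) := by
          rw [hδeq]
          have hst : (2.5 : ℝ) * 0.645 ≤ √(2 * π) * t₀ :=
            mul_le_mul hs ht1 (by norm_num) (Real.sqrt_nonneg _)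
          have hmul := mul_le_mul_of_nonneg_left hst (le_of_lt hE)
          nlinarith
  · push_neg at hcase
    by_cases ht0s : 0 ≤ t₀
    · refine le_trans (tail_le_exp_half ht0s) (ENNReal.ofReal_le_ofReal ?_)
      have h1 : rexp (-t₀ ^ 2 / 2) ≤ 1 := Real.exp_le_one_iff.2 (by nlinarith)
      have h2 : (1 / 2 : ℝ) ≤ δ := by
        rw [hδeq]
        have h3 : rexp ((0.605 : ℝ)) ≤ 2.5 := by
          have h4 : rexp (0.3025 : ℝ) ≤ (1 - 0.3025 : ℝ)⁻¹ := exp_le_inv_one_sub (by norm_num) (by norm_num)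
          have h5 : rexp (0.605 : ℝ) = rexp 0.3025 * rexp 0.3025 := by
            rw [← Real.exp_add]; norm_num
          rw [h5]
          nlinarith [Real.exp_pos (0.3025 : ℝ)]
        have h6 : rexp (-(c ^ 2) / 2) ≥ rexp (-(0.605 : ℝ)) := by
          apply Real.exp_le_exp.2
          nlinarith
        have h7 : rexp (-(0.605:ℝ)) = (rexp 0.605)⁻¹ := by rw [← Real.exp_neg]
        have h8 : (rexp (0.605:ℝ))⁻¹ ≥ (2.5 : ℝ)⁻¹ := by
          apply inv_anti₀ (Real.exp_pos _) h3
        nlinarith [Real.exp_pos (0.605 : ℝ)]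
      nlinarith [Real.exp_pos (-t₀ ^ 2 / 2)]
    · push_neg at ht0s
      refine le_trans (tail_neg ht0s) (ENNReal.ofReal_le_ofReal ?_)
      have hub : -t₀ ≤ (1 - 2 * c ^ 2) / (2 * c) := by
        have h1 : -t₀ ≤ ε / (2 * c) - c := by linarith
        have h2 : ε / (2 * c) - c ≤ 1 / (2 * c) - c := by linarith
        have h3 : 1 / (2 * c) - c = (1 - 2 * c ^ 2) / (2 * c) := by
          field_simp
        linarith
      have hcsq : c ^ 2 < 1 / 2 := by
        -- since -t₀ > 0 and -t₀ ≤ (1-2c²)/(2c)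
        by_contra h
        push_neg at h
        have : (1 - 2 * c ^ 2) / (2 * c) ≤ 0 := by
          apply div_nonpos_of_nonpos_of_nonneg (by linarith) (by positivity)
        linarith
      have hub2 : -t₀ ≤ 0.12 / 1.32 := by
        have h1 : (1 - 2 * c ^ 2) < 0.12 := by nlinarith
        have h2 : (2 : ℝ) * c > 1.32 := by linarith
        have h3 : (1 - 2 * c ^ 2) / (2 * c) ≤ 0.12 / 1.32 := by
          apply div_le_div₀ (by norm_num) (le_of_lt h1) (by norm_num) (le_of_lt h2)
        linarith
      have hδge : (0.9375 : ℝ) ≤ δ := by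
        rw [hδeq]
        have h1 : (1 : ℝ) - 1 / 4 ≤ rexp (-(1/4 : ℝ)) := by
          have := Real.add_one_le_exp (-(1/4 : ℝ))
          linarith
        have h2 : rexp (-(1/4 : ℝ)) ≤ rexp (-(c^2) / 2) := by
          apply Real.exp_le_exp.2
          nlinarith
        nlinarith
      have hsinv : (√(2 * π))⁻¹ ≤ (2.5 : ℝ)⁻¹ :=
        inv_anti₀ (by norm_num) sqrt_two_pi_ge
      have h9 : (-t₀) * (√(2 * π))⁻¹ ≤ (0.12 / 1.32) * (2.5 : ℝ)⁻¹ := by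
        apply mul_le_mul hub2 hsinv (by positivity) (by norm_num)
      nlinarith

/-- per-factor density ratio identity -/
lemma pdf_ratio {σ : ℝ} (hσ0 : 0 < σ) (a b x : ℝ) :
    gaussianPDFReal a ⟨σ ^ 2, sq_nonneg σ⟩ x
      = gaussianPDFReal b ⟨σ ^ 2, sq_nonneg σ⟩ x
        * rexp ((2 * (a - b) * x - (a ^ 2 - b ^ 2)) / (2 * σ ^ 2)) := by
  simp only [gaussianPDFReal, NNReal.coe_mk]
  change (√(2 * π * σ ^ 2))⁻¹ * rexp (-(x - a) ^ 2 / (2 * σ ^ 2)) = (√(2 * π * σ ^ 2))⁻¹ * rexp (-(x - b) ^ 2 / (2 * σ ^ 2)) * rexp ((2 * (a - b) * x - (a ^ 2 - b ^ 2)) / (2 * σ ^ 2))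
  conv_rhs => rw [mul_assoc, ← Real.exp_add]
  congr 2
  field_simp
  ring

end GM

open GM

/-- `(ε, δ)`-differential privacy of a mechanism `M : D → Measure Ω` with respect
to an adjacency relation `adj`. -/
def DP {D Ω : Type*} [MeasurableSpace Ω] (adj : D → D → Prop)
    (M : D → Measure Ω) (ε δ : ℝ) : Prop :=
  ∀ d₁ d₂, adj d₁ d₂ → ∀ O : Set Ω, MeasurableSet O →
    (M d₁ O).toReal ≤ Real.exp ε * (M d₂ O).toReal + δ


/-- **Gaussian mechanism.** For `f : D → ℝ^k` with `L₂`-sensitivity `Δ`, the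
mechanism `A(D) = f(D) + N(0, σ²I_k)` is `(ε, δ)`-differentially private for
`ε ∈ (0,1)` whenever `σ ≥ Δ · √(2 ln(1.25/δ))/ε`. -/
theorem gaussian_mechanism_privacy {D : Type*} {k : ℕ} (adj : D → D → Prop)
    (f : D → Fin k → ℝ) (Δ ε δ σ : ℝ)
    (hsens : ∀ d₁ d₂, adj d₁ d₂ →
      Real.sqrt (∑ i, (f d₁ i - f d₂ i) ^ 2) ≤ Δ)
    (hε0 : 0 < ε) (hε1 : ε < 1) (hδ : 0 < δ)
    (hσ : Δ * Real.sqrt (2 * Real.log (1.25 / δ)) / ε ≤ σ) :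
    DP adj
      (fun x => Measure.map (fun ν : Fin k → ℝ => fun i => f x i + ν i)
        (Measure.pi fun _ : Fin k => gaussianReal 0 ⟨σ ^ 2, sq_nonneg σ⟩))
      ε δ := by
  intro d₁ d₂ hadj O hO
  set vσ : ℝ≥0 := ⟨σ ^ 2, sq_nonneg σ⟩ with hvσ
  simp only
  set μ₀ : Measure (Fin k → ℝ) := Measure.pi fun _ : Fin k => gaussianReal 0 vσ with hμ₀
  have hmeas_shift : ∀ m : Fin k → ℝ, Measurable (fun ν : Fin k → ℝ => fun i => m i + ν i) :=
    fun m => measurable_pi_lambda _ fun i => measurable_const.add (measurable_pi_apply i)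
  set M₁ := Measure.map (fun ν : Fin k → ℝ => fun i => f d₁ i + ν i) μ₀ with hM₁
  set M₂ := Measure.map (fun ν : Fin k → ℝ => fun i => f d₂ i + ν i) μ₀ with hM₂
  have hM₁eq : M₁ = Measure.pi (fun i => gaussianReal (f d₁ i) vσ) := mech_eq _ _
  have hM₂eq : M₂ = Measure.pi (fun i => gaussianReal (f d₂ i) vσ) := mech_eq _ _
  have hprob1 : IsProbabilityMeasure M₁ := by rw [hM₁eq]; infer_instance
  have hprob2 : IsProbabilityMeasure M₂ := by rw [hM₂eq]; infer_instance
  have hone : (1 : ℝ) ≤ rexp ε := Real.one_le_exp (le_of_lt hε0)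
  by_cases hδ1 : 1 ≤ δ
  · have h1 : (M₁ O).toReal ≤ 1 := by
      have h2 : M₁ O ≤ 1 := prob_le_one
      have := ENNReal.toReal_mono ENNReal.one_ne_top h2
      simpa using this
    have h3 : 0 ≤ rexp ε * (M₂ O).toReal := by positivity
    linarith
  push_neg at hδ1
  -- main case
  set v : Fin k → ℝ := fun i => f d₁ i - f d₂ i with hv
  set r2 : ℝ := ∑ i, (v i) ^ 2 with hr2
  have hr2nn : 0 ≤ r2 := Finset.sum_nonneg fun i _ => sq_nonneg _
  set r : ℝ := √r2 with hrdef
  have hrΔ : r ≤ Δ := hsens d₁ d₂ hadj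
  by_cases hr0 : r2 = 0
  · -- f d₁ = f d₂
    have hfeq : (fun i => f d₁ i) = fun i => f d₂ i := by
      funext i
      have h := (Finset.sum_eq_zero_iff_of_nonneg (fun j _ => sq_nonneg (v j))).mp hr0
      have h2 := h i (Finset.mem_univ i)
      have h3 : v i = 0 := by
        have := sq_eq_zero_iff.mp h2
        exact this
      rw [hv] at h3
      simp only at h3
      linarith
    have hfi : ∀ i, f d₁ i = f d₂ i := fun i => congrFun hfeq i
    have hMeq : M₁ = M₂ := by
      rw [hM₁, hM₂]
      congr 1
      funext ν
      funext i
      rw [hfi i]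
    rw [hMeq]
    have h4 : (0 : ℝ) ≤ (M₂ O).toReal := ENNReal.toReal_nonneg
    nlinarith
  -- r2 > 0
  have hr2pos : 0 < r2 := lt_of_le_of_ne hr2nn (Ne.symm hr0)
  have hrpos : 0 < r := Real.sqrt_pos.2 hr2pos
  have hΔpos : 0 < Δ := lt_of_lt_of_le hrpos hrΔ
  have hLpos : 0 < Real.log (1.25 / δ) := by
    apply Real.log_pos
    rw [lt_div_iff₀ hδ]
    linarith
  have hσ0 : 0 < σ := lt_of_lt_of_le (by positivity) hσ
  have hvσ0 : vσ ≠ 0 := by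
    intro h
    have : (vσ : ℝ) = 0 := by rw [h]; simp
    rw [hvσ] at this
    change σ ^ 2 = 0 at this
    nlinarith
  set D2 : ℝ := ∑ i, ((f d₁ i) ^ 2 - (f d₂ i) ^ 2) with hD2
  set c₀ : ℝ := σ ^ 2 * ε + D2 / 2 with hc₀
  set G : Set (Fin k → ℝ) := {y | ∑ i, v i * y i ≤ c₀} with hG
  have hSmeas : Measurable (fun y : Fin k → ℝ => ∑ i, v i * y i) :=
    Finset.measurable_sum _ fun i _ => (measurable_pi_apply i).const_mul _
  have hGm : MeasurableSet G := measurableSet_le hSmeas measurable_const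
  -- pointwise density comparison on G
  have hpw : ∀ y ∈ G, (∏ i, gaussianPDF (f d₁ i) vσ (y i))
      ≤ ENNReal.ofReal (rexp ε) * ∏ i, gaussianPDF (f d₂ i) vσ (y i) := by
    intro y hy
    have hreal : (∏ i, gaussianPDFReal (f d₁ i) vσ (y i))
        ≤ rexp ε * ∏ i, gaussianPDFReal (f d₂ i) vσ (y i) := by
      have hfac : ∀ i, gaussianPDFReal (f d₁ i) vσ (y i)
          = gaussianPDFReal (f d₂ i) vσ (y i)
            * rexp ((2 * v i * (y i) - ((f d₁ i) ^ 2 - (f d₂ i) ^ 2)) / (2 * σ ^ 2)) := by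
        intro i
        exact pdf_ratio hσ0 (f d₁ i) (f d₂ i) (y i)
      calc (∏ i, gaussianPDFReal (f d₁ i) vσ (y i))
          = (∏ i, gaussianPDFReal (f d₂ i) vσ (y i))
            * rexp (∑ i, (2 * v i * (y i) - ((f d₁ i) ^ 2 - (f d₂ i) ^ 2)) / (2 * σ ^ 2)) := by
            rw [Real.exp_sum, ← Finset.prod_mul_distrib]
            exact Finset.prod_congr rfl fun i _ => hfac i
        _ ≤ (∏ i, gaussianPDFReal (f d₂ i) vσ (y i)) * rexp ε := by
            apply mul_le_mul_of_nonneg_left _ (Finset.prod_nonneg fun i _ => gaussianPDFReal_nonneg _ _ _)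
            apply Real.exp_le_exp.2
            have hsum : (∑ i, (2 * v i * (y i) - ((f d₁ i) ^ 2 - (f d₂ i) ^ 2)) / (2 * σ ^ 2))
                = (2 * (∑ i, v i * y i) - D2) / (2 * σ ^ 2) := by
              rw [hD2, ← Finset.sum_div]
              congr 1
              rw [Finset.mul_sum, ← Finset.sum_sub_distrib]
              exact Finset.sum_congr rfl fun i _ => by ring
            rw [hsum, div_le_iff₀ (by positivity)]
            have hyG : ∑ i, v i * y i ≤ c₀ := hy
            rw [hc₀] at hyG
            nlinarith
        _ = rexp ε * ∏ i, gaussianPDFReal (f d₂ i) vσ (y i) := by ring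
    calc (∏ i, gaussianPDF (f d₁ i) vσ (y i))
        = ENNReal.ofReal (∏ i, gaussianPDFReal (f d₁ i) vσ (y i)) := by
          rw [ENNReal.ofReal_prod_of_nonneg fun i _ => gaussianPDFReal_nonneg _ _ _]
          rfl
      _ ≤ ENNReal.ofReal (rexp ε * ∏ i, gaussianPDFReal (f d₂ i) vσ (y i)) :=
          ENNReal.ofReal_le_ofReal hreal
      _ = ENNReal.ofReal (rexp ε) * ∏ i, gaussianPDF (f d₂ i) vσ (y i) := by
          rw [ENNReal.ofReal_mul (exp_nonneg _),
            ENNReal.ofReal_prod_of_nonneg fun i _ => gaussianPDFReal_nonneg _ _ _]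
          rfl
  -- split
  have hsplit : M₁ O ≤ M₁ (O ∩ G) + M₁ Gᶜ := by
    calc M₁ O ≤ M₁ ((O ∩ G) ∪ Gᶜ) := by
          apply measure_mono
          intro x hx
          by_cases hxG : x ∈ G
          · exact Or.inl ⟨hx, hxG⟩
          · exact Or.inr hxG
      _ ≤ M₁ (O ∩ G) + M₁ Gᶜ := measure_union_le _ _
  have hOG : M₁ (O ∩ G) ≤ ENNReal.ofReal (rexp ε) * M₂ O := by
    rw [hM₁eq, hM₂eq, pi_density _ _ hvσ0, pi_density _ _ hvσ0,
      withDensity_apply _ (hO.inter hGm), withDensity_apply _ hO]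
    calc ∫⁻ y in O ∩ G, ∏ i, gaussianPDF (f d₁ i) vσ (y i)
          ∂(Measure.pi fun _ : Fin k => (volume : Measure ℝ))
        ≤ ∫⁻ y in O ∩ G, ENNReal.ofReal (rexp ε) * ∏ i, gaussianPDF (f d₂ i) vσ (y i)
          ∂(Measure.pi fun _ : Fin k => (volume : Measure ℝ)) := by
          apply setLIntegral_mono
          · exact (Finset.measurable_prod _ fun i _ =>
              (measurable_gaussianPDF _ _).comp (measurable_pi_apply i)).const_mul _
          · exact fun y hy => hpw y hy.2
      _ = ENNReal.ofReal (rexp ε) * ∫⁻ y in O ∩ G, ∏ i, gaussianPDF (f d₂ i) vσ (y i)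
          ∂(Measure.pi fun _ : Fin k => (volume : Measure ℝ)) := by
          rw [lintegral_const_mul _ (show Measurable fun y : Fin k → ℝ =>
            ∏ i, gaussianPDF (f d₂ i) vσ (y i) from Finset.measurable_prod _ fun i _ =>
            (measurable_gaussianPDF _ _).comp (measurable_pi_apply i))]
      _ ≤ ENNReal.ofReal (rexp ε) * ∫⁻ y in O, ∏ i, gaussianPDF (f d₂ i) vσ (y i)
          ∂(Measure.pi fun _ : Fin k => (volume : Measure ℝ)) := by
          apply mul_le_mul_right
          apply lintegral_mono_set
          exact Set.inter_subset_left
  -- bad event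
  have hbad : M₁ Gᶜ ≤ ENNReal.ofReal δ := by
    rw [hM₁, Measure.map_apply (hmeas_shift _) hGm.compl]
    set T : ℝ := c₀ - ∑ i, v i * f d₁ i with hT
    have hpre : (fun ν : Fin k → ℝ => fun i => f d₁ i + ν i) ⁻¹' Gᶜ
        = (fun ν : Fin k → ℝ => ∑ i, v i * ν i) ⁻¹' (Ioi T) := by
      ext ν
      simp only [mem_preimage, mem_compl_iff, hG, mem_setOf_eq, not_le, mem_Ioi, hT]
      have hsum : ∑ i, v i * (f d₁ i + ν i) = (∑ i, v i * f d₁ i) + ∑ i, v i * ν i := by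
        rw [← Finset.sum_add_distrib]
        exact Finset.sum_congr rfl fun i _ => by ring
      rw [hsum]
      constructor
      · intro h; linarith
      · intro h; linarith
    rw [hpre, ← Measure.map_apply hSmeas measurableSet_Ioi, hμ₀, map_sum vσ k v]
    have hw0 : (r2.toNNReal * vσ) ≠ 0 := by
      intro h
      rcases mul_eq_zero.mp h with h | h
      · rw [Real.toNNReal_eq_zero] at h
        · linarith
      · exact hvσ0 h
    rw [show ((∑ i, (v i) ^ 2).toNNReal : ℝ≥0) = r2.toNNReal from rfl]
    rw [gauss_scale _ hw0]
    have hsqw : √(((r2.toNNReal * vσ : ℝ≥0)) : ℝ) = r * σ := by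
      push_cast
      rw [Real.coe_toNNReal _ hr2nn, hvσ]
      change √(r2 * σ ^ 2) = r * σ
      rw [Real.sqrt_mul hr2nn, hrdef, Real.sqrt_sq (le_of_lt hσ0)]
    rw [hsqw]
    have hTval : T = σ ^ 2 * ε - r2 / 2 := by
      rw [hT, hc₀]
      have hterm : ∀ i : Fin k, ((f d₁ i) ^ 2 - (f d₂ i) ^ 2) / 2 - v i * f d₁ i
          = -(v i) ^ 2 / 2 := by
        intro i
        show ((f d₁ i) ^ 2 - (f d₂ i) ^ 2) / 2 - (f d₁ i - f d₂ i) * f d₁ i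
          = -(f d₁ i - f d₂ i) ^ 2 / 2
        ring
      have hkey : D2 / 2 - ∑ i, v i * f d₁ i = - r2 / 2 := by
        calc D2 / 2 - ∑ i, v i * f d₁ i
            = ∑ i, (((f d₁ i) ^ 2 - (f d₂ i) ^ 2) / 2 - v i * f d₁ i) := by
              rw [hD2, Finset.sum_div, ← Finset.sum_sub_distrib]
          _ = ∑ i, (-(v i) ^ 2 / 2) := Finset.sum_congr rfl fun i _ => hterm i
          _ = - r2 / 2 := by
              rw [hr2]
              rw [← Finset.sum_div]
              congr 1
              rw [← Finset.sum_neg_distrib]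
      linarith [hkey]
    have hTdiv : T / (r * σ) = σ * ε / r - r / (2 * σ) := by
      rw [hTval]
      have hr2eq : r2 = r ^ 2 := by rw [hrdef, Real.sq_sqrt hr2nn]
      rw [hr2eq]
      field_simp
    rw [hTdiv]
    exact numeric hε0 hε1 hδ hδ1 hrpos hrΔ hσ
  -- combine
  have hmain : M₁ O ≤ ENNReal.ofReal (rexp ε) * M₂ O + ENNReal.ofReal δ := by
    calc M₁ O ≤ M₁ (O ∩ G) + M₁ Gᶜ := hsplit
      _ ≤ ENNReal.ofReal (rexp ε) * M₂ O + ENNReal.ofReal δ := add_le_add hOG hbad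
  have hfin : ENNReal.ofReal (rexp ε) * M₂ O + ENNReal.ofReal δ ≠ ⊤ := by
    apply ENNReal.add_ne_top.2
    constructor
    · exact ENNReal.mul_ne_top ENNReal.ofReal_ne_top (measure_ne_top _ _)
    · exact ENNReal.ofReal_ne_top
  calc (M₁ O).toReal ≤ (ENNReal.ofReal (rexp ε) * M₂ O + ENNReal.ofReal δ).toReal :=
        ENNReal.toReal_mono hfin hmain
    _ = rexp ε * (M₂ O).toReal + δ := by
        rw [ENNReal.toReal_add (ENNReal.mul_ne_top ENNReal.ofReal_ne_top (measure_ne_top _ _))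
          ENNReal.ofReal_ne_top, ENNReal.toReal_mul, ENNReal.toReal_ofReal (exp_nonneg _),
          ENNReal.toReal_ofReal (le_of_lt hδ)]
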